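/- Let 2 < γ < 3, ψ(x) = x^{-1/(γ-1)} on (0,1], and g(x) = ∫₀¹ ψ(b)(1 − exp(−x ψ(b))) db. Then for every θ > 0 the equation A = θ g(A) has a unique solution A_θ > 0; i.e., the critical value of θ is 0 when 2 < γ < 3. -/

import Mathlib

open MeasureTheory Filter Set

/-- `(1 - e^{-t})/t` is strictly decreasing on `(0,∞)`. -/
lemma aux_strictAnti : StrictAntiOn (fun t : ℝ => (1 - Real.exp (-t)) * t⁻¹) (Ioi 0) := by
  apply strictAntiOn_of_deriv_neg (convex_Ioi 0)
  · fun_prop (disch := intro x hx; exact ne_of_gt hx)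
  · intro x hx
    rw [interior_Ioi] at hx
    have hx0 : x ≠ 0 := ne_of_gt hx
    have h1 : HasDerivAt (fun t : ℝ => 1 - Real.exp (-t)) (Real.exp (-x)) x := by
      simpa using ((Real.hasDerivAt_exp (-x)).comp x (hasDerivAt_neg x)).const_sub 1
    have h2 : HasDerivAt (fun t : ℝ => t⁻¹) (-(x^2)⁻¹) x := by
      simpa using (hasDerivAt_inv hx0)
    have h12 : HasDerivAt (fun t : ℝ => (1 - Real.exp (-t)) * t⁻¹) _ x := h1.mul h2
    rw [h12.deriv]
    have hlt : x + 1 < Real.exp x := Real.add_one_lt_exp hx0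
    have hexp : Real.exp (-x) * (x + 1) < 1 := by
      rw [Real.exp_neg, inv_mul_lt_iff₀ (Real.exp_pos x)]
      linarith
    have hx2 : (0:ℝ) < x^2 := by positivity
    have heq : Real.exp (-x) * x⁻¹ + (1 - Real.exp (-x)) * (-(x^2)⁻¹)
        = (Real.exp (-x) * (x + 1) - 1) * (x^2)⁻¹ := by
      field_simp
      ring
    rw [heq]
    apply mul_neg_of_neg_of_pos _ (inv_pos.2 hx2)
    linarith

lemma aux_cross {a b : ℝ} (ha : 0 < a) (hab : a < b) :
    a * (1 - Real.exp (-b)) < b * (1 - Real.exp (-a)) := by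
  have hb : 0 < b := ha.trans hab
  have h := aux_strictAnti (mem_Ioi.2 ha) (mem_Ioi.2 hb) hab
  simp only [← div_eq_mul_inv] at h
  rw [div_lt_div_iff₀ hb ha] at h
  linarith

lemma aux_half {t : ℝ} (h0 : 0 ≤ t) (h1 : t ≤ 1) : t / 2 ≤ 1 - Real.exp (-t) := by
  have h1t : (0:ℝ) < 1 + t := by linarith
  have he : Real.exp (-t) ≤ (1 + t)⁻¹ := by
    rw [Real.exp_neg]
    exact inv_anti₀ h1t (by have := Real.add_one_le_exp t; linarith)
  have hinv : (1 + t) * (1 + t)⁻¹ = 1 := mul_inv_cancel₀ h1t.ne'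
  nlinarith [sq_nonneg t, inv_nonneg.2 h1t.le]

set_option maxHeartbeats 1000000 in
/-- For `2 < γ < 3`, `ψ(x) = x^(-1/(γ-1))` and
`g(x) = ∫₀¹ ψ(b)(1 - exp(-x ψ(b))) db`, for every `θ > 0` the equation `A = θ g(A)`
has a unique positive solution; i.e. the critical value of `θ` is `0`. -/
theorem chungLu_fixed_point_subcubic (γ : ℝ) (hγ2 : 2 < γ) (hγ3 : γ < 3)
    (ψ g : ℝ → ℝ)
    (hψ : ∀ x, ψ x = x ^ (-(1 / (γ - 1))))
    (hg : ∀ x, g x = ∫ b in (0:ℝ)..1, ψ b * (1 - Real.exp (-x * ψ b))) :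
    ∀ θ : ℝ, 0 < θ → ∃! A : ℝ, 0 < A ∧ A = θ * g A := by
  intro θ hθ
  set α : ℝ := 1 / (γ - 1) with hαdef
  have hγ1 : (1:ℝ) < γ - 1 := by linarith
  have hα0 : 0 < α := by positivity
  have hα1 : α < 1 := by rw [hαdef, div_lt_one (by linarith)]; linarith
  have hα2 : 1 / 2 < α := by rw [hαdef, lt_div_iff₀ (by linarith)]; linarith
  -- set up the set integral version
  set f : ℝ → ℝ → ℝ := fun x b => ψ b * (1 - Real.exp (-x * ψ b)) with hfdef
  set G : ℝ → ℝ := fun x => ∫ b in Ioc (0:ℝ) 1, f x b with hGdef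
  have hgG : ∀ x, g x = G x := by
    intro x
    rw [hg, intervalIntegral.integral_of_le zero_le_one]
  have hψeq : ψ = fun b => b ^ (-α) := funext hψ
  have hψpos : ∀ b ∈ Ioc (0:ℝ) 1, 0 < ψ b := fun b hb => by
    rw [hψeq]; exact Real.rpow_pos_of_pos hb.1 _
  have mψ : Measurable ψ := by rw [hψeq]; fun_prop
  have mf : ∀ x, Measurable (f x) := by
    intro x
    apply mψ.mul
    exact measurable_const.sub ((mψ.const_mul (-x)).exp)
  have Iψ : IntegrableOn ψ (Ioc (0:ℝ) 1) volume := by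
    rw [hψeq]
    exact (intervalIntegrable_iff_integrableOn_Ioc_of_le zero_le_one).1
      (intervalIntegral.intervalIntegrable_rpow' (by linarith))
  have hfb : ∀ x : ℝ, 0 ≤ x → ∀ b ∈ Ioc (0:ℝ) 1, 0 ≤ f x b ∧ f x b ≤ ψ b := by
    intro x hx b hb
    have hψb := hψpos b hb
    have ht : 0 ≤ x * ψ b := mul_nonneg hx hψb.le
    have h1 : Real.exp (-(x * ψ b)) ≤ 1 := Real.exp_le_one_iff.2 (by linarith)
    have h2 : 0 < Real.exp (-(x * ψ b)) := Real.exp_pos _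
    constructor
    · simp only [hfdef, neg_mul]
      nlinarith
    · simp only [hfdef, neg_mul]
      nlinarith
  have habs : ∀ x : ℝ, 0 ≤ x →
      ∀ᵐ b ∂(volume.restrict (Ioc (0:ℝ) 1)), ‖f x b‖ ≤ ψ b := by
    intro x hx
    rw [ae_restrict_iff' measurableSet_Ioc]
    refine ae_of_all _ fun b hb => ?_
    rw [Real.norm_eq_abs, abs_of_nonneg (hfb x hx b hb).1]
    exact (hfb x hx b hb).2
  have If : ∀ x : ℝ, 0 ≤ x → IntegrableOn (f x) (Ioc (0:ℝ) 1) volume := by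
    intro x hx
    exact Integrable.mono' Iψ (mf x).aestronglyMeasurable (habs x hx)
  set C : ℝ := ∫ b in Ioc (0:ℝ) 1, ψ b with hCdef
  have hC0 : 0 ≤ C := setIntegral_nonneg measurableSet_Ioc fun b hb => (hψpos b hb).le
  have hGle : ∀ x : ℝ, 0 ≤ x → G x ≤ C := by
    intro x hx
    exact setIntegral_mono_on (If x hx) Iψ measurableSet_Ioc fun b hb => (hfb x hx b hb).2
  -- continuity
  have hGcont : ∀ x₀ : ℝ, 0 < x₀ → ContinuousAt G x₀ := by
    intro x₀ hx₀
    apply continuousAt_of_dominated (bound := ψ)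
    · exact Eventually.of_forall fun x => (mf x).aestronglyMeasurable
    · filter_upwards [Ioi_mem_nhds hx₀] with x hx
      exact habs x (le_of_lt hx)
    · exact Iψ
    · refine ae_of_all _ fun b => ?_
      have : Continuous fun x : ℝ => f x b := by
        apply continuous_const.mul
        exact continuous_const.sub (Real.continuous_exp.comp (continuous_neg.mul continuous_const))
      exact this.continuousAt
  -- setup for the lower bound near 0
  set β : ℝ := 2 * α - 1 with hβdef
  have hβ0 : 0 < β := by rw [hβdef]; linarith
  set c : ℝ := 2 * (1 + 2 * β / θ) with hcdef
  have hc1 : 1 < c := by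
    have h : 0 < 2 * β / θ := by positivity
    rw [hcdef]; linarith
  have hc0 : (0:ℝ) < c := by linarith
  set s : ℝ := c ^ (-(1/β)) with hsdef
  have hs0 : 0 < s := Real.rpow_pos_of_pos hc0 _
  have hs1 : s < 1 := Real.rpow_lt_one_of_one_lt_of_neg hc1 (neg_lt_zero.2 (by positivity))
  have hsc : s ^ (-β) = c := by
    rw [hsdef, ← Real.rpow_mul hc0.le]
    rw [show (-(1/β)) * (-β) = 1 by field_simp]
    exact Real.rpow_one c
  -- the integral over (s,1] of b^(-2α)
  set K : ℝ := ∫ b in Ioc s 1, b ^ (-(2*α)) with hKdef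
  have hKval : K = (c - 1) / β := by
    rw [hKdef, ← intervalIntegral.integral_of_le hs1.le]
    rw [integral_rpow (Or.inr ⟨by intro h; rw [neg_eq_iff_eq_neg] at h; nlinarith,
      by rw [uIcc_of_le hs1.le]; rintro ⟨h0, -⟩; linarith⟩)]
    rw [show -(2*α) + 1 = -β by rw [hβdef]; ring]
    rw [Real.one_rpow, hsc]
    rw [show (1 - c) / -β = (c - 1) / β by rw [div_neg, neg_div', neg_sub]]
  have hK4 : 4 ≤ θ * K := by
    rw [hKval, hcdef]
    rw [show θ * ((2 * (1 + 2 * β / θ) - 1) / β) = θ / β + 4 by field_simp; ring]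
    have : 0 < θ / β := by positivity
    linarith
  -- small x lower bound: for 0 < x ≤ s^α we have x < θ * G x
  have hIK : IntegrableOn (fun b : ℝ => b ^ (-(2*α))) (Ioc s 1) volume := by
    apply (ContinuousOn.integrableOn_Icc ?_).mono_set Ioc_subset_Icc_self
    intro b hb
    exact (Real.continuousAt_rpow_const b _ (Or.inl (ne_of_gt (lt_of_lt_of_le hs0 hb.1)))).continuousWithinAt
  have hsmall : ∀ x : ℝ, 0 < x → x ≤ s ^ α → x < θ * G x := by
    intro x hx hxs
    have hGx1 : ∫ b in Ioc s 1, f x b ≤ G x := by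
      apply setIntegral_mono_set (If x hx.le)
      · exact (ae_restrict_iff' measurableSet_Ioc).2
          (ae_of_all _ fun b hb => (hfb x hx.le b hb).1)
      · exact HasSubset.Subset.eventuallyLE (Ioc_subset_Ioc_left hs0.le)
    have hGx2 : ∫ b in Ioc s 1, (x / 2) * b ^ (-(2*α)) ≤ ∫ b in Ioc s 1, f x b := by
      apply setIntegral_mono_on (hIK.const_mul _)
        ((If x hx.le).mono_set (Ioc_subset_Ioc_left hs0.le)) measurableSet_Ioc
      intro b hb
      have hb0 : 0 < b := hs0.trans hb.1
      have hψb : ψ b = b ^ (-α) := hψ b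
      have hψbpos : 0 < ψ b := hψpos b ⟨hb0, hb.2⟩
      have hψle : ψ b ≤ s ^ (-α) := by
        rw [hψb]
        exact Real.rpow_le_rpow_of_nonpos hs0 hb.1.le (by linarith)
      have htle : x * ψ b ≤ 1 := by
        calc x * ψ b ≤ s ^ α * s ^ (-α) :=
              mul_le_mul hxs hψle hψbpos.le (Real.rpow_nonneg hs0.le _)
        _ = 1 := by rw [← Real.rpow_add hs0, add_neg_cancel, Real.rpow_zero]
      have ht0 : 0 ≤ x * ψ b := mul_nonneg hx.le hψbpos.le
      have hhalf := aux_half ht0 htle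
      have hsq : ψ b * ψ b = b ^ (-(2*α)) := by
        rw [hψb, ← Real.rpow_add hb0]
        norm_num
        ring_nf
      calc (x / 2) * b ^ (-(2*α)) = ψ b * (x * ψ b / 2) := by rw [← hsq]; ring
      _ ≤ ψ b * (1 - Real.exp (-(x * ψ b))) :=
          mul_le_mul_of_nonneg_left hhalf hψbpos.le
      _ = f x b := by rw [hfdef]; simp only [neg_mul]
    have hint : ∫ b in Ioc s 1, (x / 2) * b ^ (-(2*α)) = (x / 2) * K := by
      simp only [mul_comm (x/2) _]
      rw [integral_mul_const, hKdef, mul_comm]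
    have hGcm : (x / 2) * K ≤ G x := by
      rw [← hint]; exact le_trans hGx2 hGx1
    have : θ * ((x / 2) * K) ≤ θ * G x := mul_le_mul_of_nonneg_left hGcm hθ.le
    have h2 : θ * ((x / 2) * K) = (θ * K) * (x / 2) := by ring
    nlinarith
  -- existence via IVT
  set M : ℝ := θ * C + 1 with hMdef
  have hM1 : (1:ℝ) ≤ M := by nlinarith
  set ε : ℝ := min (s ^ α) 1 with hεdef
  have hε0 : 0 < ε := lt_min (Real.rpow_pos_of_pos hs0 _) one_pos
  have hεM : ε ≤ M := le_trans (min_le_right _ _) hM1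
  set H : ℝ → ℝ := fun x => θ * G x - x with hHdef
  have hHε : 0 < H ε := by
    have := hsmall ε hε0 (min_le_left _ _)
    simp only [hHdef]
    linarith
  have hHM : H M < 0 := by
    have h1 : θ * G M ≤ θ * C :=
      mul_le_mul_of_nonneg_left (hGle M (by linarith)) hθ.le
    simp only [hHdef]
    linarith
  have hHcont : ContinuousOn H (Icc ε M) := by
    intro x hx
    have hx0 : 0 < x := lt_of_lt_of_le hε0 hx.1
    exact ((continuousAt_const.mul (hGcont x hx0)).sub continuousAt_id).continuousWithinAt
  have hivt := intermediate_value_Icc' hεM hHcont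
  have h0mem : (0:ℝ) ∈ Icc (H M) (H ε) := ⟨hHM.le, hHε.le⟩
  obtain ⟨A, hAmem, hHA⟩ := hivt h0mem
  have hA0 : 0 < A := lt_of_lt_of_le hε0 hAmem.1
  have hAfix : A = θ * G A := by
    simp only [hHdef] at hHA
    linarith
  -- uniqueness
  have uniq : ∀ P Q : ℝ, 0 < P → P < Q → P = θ * G P → Q = θ * G Q → False := by
    intro P Q hP hPQ hPfix hQfix
    have hQ : 0 < Q := hP.trans hPQ
    set u : ℝ → ℝ := fun b => f P b * Q - f Q b * P with hudef
    have hIu : IntegrableOn u (Ioc (0:ℝ) 1) volume :=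
      ((If P hP.le).mul_const Q).sub ((If Q hQ.le).mul_const P)
    have hGP : G P = P / θ := by rw [eq_div_iff hθ.ne']; linarith
    have hGQ : G Q = Q / θ := by rw [eq_div_iff hθ.ne']; linarith
    have hIu0 : ∫ b in Ioc (0:ℝ) 1, u b = 0 := by
      rw [hudef]
      rw [integral_sub ((If P hP.le).mul_const Q) ((If Q hQ.le).mul_const P)]
      rw [integral_mul_const, integral_mul_const]
      have h1 : (∫ b in Ioc (0:ℝ) 1, f P b) = G P := rfl
      have h2 : (∫ b in Ioc (0:ℝ) 1, f Q b) = G Q := rfl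
      rw [h1, h2, hGP, hGQ]
      ring
    have hupos : ∀ b ∈ Ioc (0:ℝ) 1, 0 < u b := by
      intro b hb
      have hψb := hψpos b hb
      have hcross := aux_cross (mul_pos hP hψb) (mul_lt_mul_of_pos_right hPQ hψb)
      have heq : u b = (Q * ψ b) * (1 - Real.exp (-(P * ψ b)))
          - (P * ψ b) * (1 - Real.exp (-(Q * ψ b))) := by
        simp only [hudef, hfdef, neg_mul]
        ring
      rw [heq]
      linarith
    have hunn : 0 ≤ᶠ[ae (volume.restrict (Ioc (0:ℝ) 1))] u :=
      (ae_restrict_iff' measurableSet_Ioc).2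
        (ae_of_all _ fun b hb => (hupos b hb).le)
    have huz : u =ᶠ[ae (volume.restrict (Ioc (0:ℝ) 1))] 0 :=
      (integral_eq_zero_iff_of_nonneg_ae hunn hIu).1 hIu0
    have hz : ∀ᵐ b ∂volume, b ∈ Ioc (0:ℝ) 1 → u b = 0 :=
      (ae_restrict_iff' measurableSet_Ioc).1 huz
    have hnm : ∀ᵐ b ∂volume, b ∉ Ioc (0:ℝ) 1 :=
      hz.mono fun b hb hmem => absurd (hb hmem) (ne_of_gt (hupos b hmem))
    have : volume (Ioc (0:ℝ) 1) = 0 := measure_eq_zero_iff_ae_notMem.2 hnm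
    rw [Real.volume_Ioc] at this
    simp at this
  refine ⟨A, ⟨hA0, by rw [hgG]; exact hAfix⟩, ?_⟩
  rintro B ⟨hB0, hBfix⟩
  rw [hgG] at hBfix
  rcases lt_trichotomy B A with h | h | h
  · exact absurd (uniq B A hB0 h hBfix hAfix) not_false
  · exact h
  · exact absurd (uniq A B hA0 h hAfix hBfix) not_false
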